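/- Let P be a natural unit interval order on [n] with incomparability graph G=([n],E), and let a_j = |{ {j,i} ∈ E : j < i }| for j ∈ [n-1]. Then ∑_{σ ∈ ND_P} t^{inv_G(σ)} = ∏_{j=1}^{n-1} (1 + t·[a_j]_t), where ND_P is the set of permutations σ ∈ S_n with no P-descent (no i with σ(i) >_P σ(i+1)), and [k]_t = 1+t+⋯+t^{k-1}. -/

import Mathlib

/-- `[k]_t = 1 + t + ⋯ + t^(k-1)`. -/
noncomputable def tnum (R : Type*) [CommSemiring R] (k : ℕ) : Polynomial R :=
  ∑ j ∈ Finset.range k, Polynomial.X ^ j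

/-- `[n]_t! = ∏_{i=1}^n [i]_t`. -/
noncomputable def tfact (R : Type*) [CommSemiring R] (n : ℕ) : Polynomial R :=
  ∏ i ∈ Finset.range n, tnum R (i + 1)

/-- The word `σ(1), σ(2), …, σ(n)` of a permutation, in 0-based positions:
`word n σ i = σ(i+1)` for `i < n` (letters taken in `{1,…,n}`), and `0` otherwise. -/
def word (n : ℕ) (σ : Equiv.Perm (Fin n)) (i : ℕ) : ℕ :=
  if h : i < n then (σ ⟨i, h⟩).1 + 1 else 0

/-- `inv_G(σ)`: the number of pairs of positions `i < j` with `{σ(i), σ(j)}` an edge of the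
incomparability graph `G` of `P` (i.e. a `P`-incomparable pair) and `σ(i) > σ(j)`. -/
def invG (n : ℕ) (ltP : ℕ → ℕ → Prop) [DecidableRel ltP] (σ : Equiv.Perm (Fin n)) : ℕ :=
  ((Finset.range n ×ˢ Finset.range n).filter fun p =>
    p.1 < p.2 ∧ word n σ p.2 < word n σ p.1 ∧
      ¬ ltP (word n σ p.1) (word n σ p.2) ∧ ¬ ltP (word n σ p.2) (word n σ p.1)).card

set_option linter.unusedSectionVars false

namespace NUIOaux



variable (ltP : ℕ → ℕ → Prop) [DecidableRel ltP]

def ndes (l : List ℕ) : Prop := List.Chain' (fun a b => ¬ ltP b a) l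

instance : DecidablePred (ndes ltP) := fun l => by unfold ndes List.Chain'; infer_instance

def pivB (x y : ℕ) : Bool := decide (y < x ∧ ¬ ltP x y ∧ ¬ ltP y x)

def incB (j y : ℕ) : Bool := decide (¬ ltP j y ∧ ¬ ltP y j)

def invL : List ℕ → ℕ
  | [] => 0
  | x :: l => l.countP (pivB ltP x) + invL l

noncomputable def fP (l : List ℕ) : Polynomial ℚ :=
  if ndes ltP l then Polynomial.X ^ invL ltP l else 0

theorem tnum_succ (k : ℕ) : tnum ℚ (k + 1) = 1 + Polynomial.X * tnum ℚ k := by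
  unfold tnum
  rw [Finset.sum_range_succ']
  simp only [pow_succ', pow_zero, ← Finset.mul_sum]
  ring

theorem tnum_one : tnum ℚ 1 = 1 := by simp [tnum]


variable {ltP}

omit [DecidableRel ltP] in
theorem not_ltP_of_gt (hnat : ∀ x y, ltP x y → x < y) {a b : ℕ} (h : b < a) : ¬ ltP a b :=
  fun hl => absurd (hnat _ _ hl) (by omega)

theorem ndes_cons_min (hnat : ∀ x y, ltP x y → x < y) {j : ℕ} {v : List ℕ}
    (hall : ∀ x ∈ v, j < x) : ndes ltP (j :: v) ↔ ndes ltP v := by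
  cases v with
  | nil => simp [ndes, List.Chain']
  | cons y t =>
    unfold ndes List.Chain'
    rw [List.isChain_cons_cons]
    simp only [iff_self_and, and_iff_right_iff_imp]
    intro _
    exact not_ltP_of_gt hnat (hall y List.mem_cons_self)

theorem invL_cons_min {j : ℕ} {v : List ℕ} (hall : ∀ x ∈ v, j < x) :
    invL ltP (j :: v) = invL ltP v := by
  have : v.countP (pivB ltP j) = 0 := by
    rw [List.countP_eq_zero]
    intro a ha
    simp only [pivB, decide_eq_true_eq, not_and]
    intro h
    exact absurd h (by have := hall a ha; omega)
  simp [invL, this]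

theorem fP_cons_min (hnat : ∀ x y, ltP x y → x < y) {j : ℕ} {v : List ℕ}
    (hall : ∀ x ∈ v, j < x) : fP ltP (j :: v) = fP ltP v := by
  unfold fP
  rw [invL_cons_min hall, if_congr (ndes_cons_min hnat hall) rfl rfl]

theorem perm_of_mem_permutations'Aux {j : ℕ} : ∀ {xs w : List ℕ},
    w ∈ List.permutations'Aux j xs → w.Perm (j :: xs)
  | [], w, hw => by simp [List.permutations'Aux] at hw; simp [hw]
  | x :: t, w, hw => by
    simp only [List.permutations'Aux, List.mem_cons, List.mem_map] at hw
    rcases hw with rfl | ⟨w', hw', rfl⟩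
    · exact List.Perm.refl _
    · exact (List.Perm.cons x (perm_of_mem_permutations'Aux hw')).trans
        (List.Perm.swap j x t)




variable {ltP : ℕ → ℕ → Prop} [DecidableRel ltP]

theorem ndes_nil : ndes ltP [] := List.isChain_nil

theorem ndes_singleton (a : ℕ) : ndes ltP [a] := List.isChain_singleton a

theorem ndes_cons_cons {a b : ℕ} {l : List ℕ} :
    ndes ltP (a :: b :: l) ↔ ¬ ltP b a ∧ ndes ltP (b :: l) := List.isChain_cons_cons

theorem Hsum (n : ℕ)
    (htrans : ∀ x y z, ltP x y → ltP y z → ltP x z)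
    (hnat : ∀ x y, ltP x y → x < y)
    (hnuio : ∀ x y z, x ∈ Finset.Icc 1 n → y ∈ Finset.Icc 1 n → z ∈ Finset.Icc 1 n →
      y ≠ x → y ≠ z → ltP x z →
      ¬ ltP x y → ¬ ltP y x → ¬ ltP y z → ¬ ltP z y → x < y ∧ y < z)
    (j : ℕ) (hj1 : 1 ≤ j) (hjn : j ≤ n) :
    ∀ (w : List ℕ), (∀ x ∈ w, j < x ∧ x ≤ n) →
    ((List.permutations'Aux j w).map (fP ltP)).sum
      = if ndes ltP w then
          Polynomial.X ^ invL ltP w * tnum ℚ (w.countP (incB ltP j) + 1) else 0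
  | [], _ => by
    simp [List.permutations'Aux, fP, ndes, List.Chain', invL, tnum_one]
  | [x], hall => by
    have hx := hall x List.mem_cons_self
    have hxj : ¬ ltP x j := not_ltP_of_gt hnat hx.1
    have hpjx : pivB ltP j x = false := by
      simp only [pivB, decide_eq_false_iff_not, not_and]
      intro h'; omega
    have hinvjx : invL ltP [j, x] = 0 := by
      simp [invL, List.countP_cons, hpjx]
    have hinvx : invL ltP [x] = 0 := by simp [invL]
    simp only [List.permutations'Aux, List.map_cons, List.map_nil, List.sum_cons,
      List.sum_nil, add_zero]
    have h1 : fP ltP [j, x] = 1 := by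
      unfold fP
      rw [if_pos (ndes_cons_cons.2 ⟨hxj, ndes_singleton x⟩), hinvjx, pow_zero]
    by_cases hjx : ltP j x
    · have h2 : fP ltP [x, j] = 0 := by
        unfold fP
        rw [if_neg]
        rw [ndes_cons_cons]
        push_neg
        intro h; exact absurd hjx h
      have h3 : List.countP (incB ltP j) [x] = 0 := by
        simp [List.countP_cons, incB, hjx]
      rw [h1, h2, h3, if_pos (ndes_singleton x), hinvx, pow_zero, one_mul, tnum_one]
      ring
    · have hpxj : pivB ltP x j = true := by
        simp only [pivB, decide_eq_true_eq]
        exact ⟨hx.1, hxj, hjx⟩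
      have h2 : fP ltP [x, j] = Polynomial.X := by
        unfold fP
        rw [if_pos (ndes_cons_cons.2 ⟨hjx, ndes_singleton j⟩)]
        simp [invL, List.countP_cons, hpxj]
      have h3 : List.countP (incB ltP j) [x] = 1 := by
        have : incB ltP j x = true := by
          simp only [incB, decide_eq_true_eq]; exact ⟨hjx, hxj⟩
        simp [List.countP_cons, this]
      rw [h1, h2, h3, if_pos (ndes_singleton x), hinvx, pow_zero, one_mul,
        tnum_succ, tnum_one]
      ring
  | x :: x0 :: t, hall => by
    have hx := hall x List.mem_cons_self
    have hxs : ∀ y ∈ x0 :: t, j < y ∧ y ≤ n :=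
      fun y hy => hall y (List.mem_cons_of_mem _ hy)
    have hx0 := hxs x0 List.mem_cons_self
    have hxj : ¬ ltP x j := not_ltP_of_gt hnat hx.1
    have hx0j : ¬ ltP x0 j := not_ltP_of_gt hnat hx0.1
    have hallgt : ∀ y ∈ x0 :: t, j < y := fun y hy => (hxs y hy).1
    have hallgtx : ∀ y ∈ x :: x0 :: t, j < y := fun y hy => (hall y hy).1
    have hIH := Hsum n htrans hnat hnuio j hj1 hjn (x0 :: t) hxs
    set I := invL ltP (x0 :: t) with hIdef
    set A' := (x0 :: t).countP (pivB ltP x) with hA'def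
    set c' := (x0 :: t).countP (incB ltP j) with hc'def
    set Aj := (j :: x0 :: t).countP (pivB ltP x) with hAjdef
    -- expand the sums
    simp only [List.permutations'Aux, List.map_cons, List.sum_cons, List.map_map] at hIH ⊢
    set S := ((List.permutations'Aux j t).map (fP ltP ∘ (x0 :: ·))).sum with hSdef
    -- first term
    have hT1 : fP ltP (j :: x :: x0 :: t) =
        if ndes ltP (x :: x0 :: t) then Polynomial.X ^ invL ltP (x :: x0 :: t) else 0 := by
      rw [fP_cons_min hnat hallgtx]; rfl
    -- front-insert value, used twice
    have hfront : fP ltP (j :: x0 :: t) = if ndes ltP (x0 :: t) then Polynomial.X ^ I else 0 := by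
      rw [fP_cons_min hnat hallgt]; rfl
    -- second term
    have hinvJ : invL ltP (x :: j :: x0 :: t) = Aj + I := by
      show (j :: x0 :: t).countP (pivB ltP x) + invL ltP (j :: x0 :: t) = Aj + I
      rw [invL_cons_min hallgt]
    have hT2 : fP ltP (x :: j :: x0 :: t) =
        if ¬ ltP j x ∧ ndes ltP (x0 :: t) then Polynomial.X ^ (Aj + I) else 0 := by
      unfold fP
      rw [hinvJ, if_congr (ndes_cons_cons.trans
        (and_congr Iff.rfl (ndes_cons_min hnat hallgt))) rfl rfl]
    -- third terms
    have hterm : ∀ w ∈ List.permutations'Aux j t,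
        fP ltP (x :: x0 :: w) =
          if ltP x0 x then 0 else Polynomial.X ^ Aj * fP ltP (x0 :: w) := by
      intro w hw
      have hperm : (x0 :: w).Perm (j :: x0 :: t) :=
        ((perm_of_mem_permutations'Aux hw).cons x0).trans (List.Perm.swap j x0 t)
      have hcount : (x0 :: w).countP (pivB ltP x) = Aj := hperm.countP_eq _
      have hinv : invL ltP (x :: x0 :: w) = Aj + invL ltP (x0 :: w) := by
        show (x0 :: w).countP (pivB ltP x) + invL ltP (x0 :: w) = _
        rw [hcount]
      unfold fP
      rw [hinv, if_congr (ndes_cons_cons (ltP := ltP)) rfl rfl]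
      by_cases hd : ltP x0 x
      · simp [hd]
      · by_cases hc : ndes ltP (x0 :: w) <;> simp [hd, hc, pow_add]
    have hthird : (List.map (fP ltP ∘ List.cons x ∘ List.cons x0) (List.permutations'Aux j t)).sum
        = if ltP x0 x then 0 else Polynomial.X ^ Aj * S := by
      rw [show (fP ltP ∘ List.cons x ∘ List.cons x0) = fun w => fP ltP (x :: x0 :: w) from rfl,
        List.map_congr_left hterm]
      by_cases hd : ltP x0 x
      · simp [hd]
      · simp only [hd, if_false]
        rw [hSdef]
        exact List.sum_map_mul_left _ _ _
    rw [hT1, hT2, hthird]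
    have hndxx : ndes ltP (x :: x0 :: t) ↔ (¬ ltP x0 x ∧ ndes ltP (x0 :: t)) := ndes_cons_cons
    have hinvxx : invL ltP (x :: x0 :: t) = A' + I := rfl
    have hcnew : List.countP (incB ltP j) (x :: x0 :: t)
        = c' + if incB ltP j x then 1 else 0 := List.countP_cons
    have hAj : Aj = A' + if pivB ltP x j then 1 else 0 := List.countP_cons
    by_cases hd : ltP x0 x
    · have hjx : ltP j x := by
        by_contra hjx
        have hjx0 : ¬ ltP j x0 := fun h => hjx (htrans _ _ _ h hd)
        have hmx0 : x0 ∈ Finset.Icc 1 n := by simp only [Finset.mem_Icc]; omega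
        have hmj : j ∈ Finset.Icc 1 n := by simp only [Finset.mem_Icc]; omega
        have hmx : x ∈ Finset.Icc 1 n := by simp only [Finset.mem_Icc]; omega
        obtain ⟨h1, h2⟩ := hnuio x0 j x hmx0 hmj hmx (by omega) (by omega) hd
          hx0j hjx0 hjx hxj
        omega
      have h0 : ¬ ndes ltP (x :: x0 :: t) := fun h => (hndxx.1 h).1 hd
      have h2' : ¬(¬ ltP j x ∧ ndes ltP (x0 :: t)) := fun h => h.1 hjx
      rw [if_neg h0, if_neg h2', if_pos hd, if_neg h0]
      ring
    · have hS : S = (if ndes ltP (x0 :: t) then Polynomial.X ^ I * tnum ℚ (c' + 1) else 0)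
          - (if ndes ltP (x0 :: t) then Polynomial.X ^ I else 0) := by
        rw [hfront] at hIH
        exact eq_sub_of_add_eq' hIH
      rw [if_neg hd, hS]
      by_cases hnd : ndes ltP (x0 :: t)
      · have hndT : ndes ltP (x :: x0 :: t) := hndxx.2 ⟨hd, hnd⟩
        rw [if_pos hndT, if_pos hndT, if_pos hnd, if_pos hnd, hinvxx, hcnew, hAj]
        by_cases hjx : ltP j x
        · have hpiv : pivB ltP x j = false := by
            simp only [pivB, decide_eq_false_iff_not, not_and]
            intro _ _; exact fun h => h hjx
          have hinc : incB ltP j x = false := by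
            simp only [incB, decide_eq_false_iff_not, not_and]
            intro h; exact absurd hjx h
          have hne : ¬(¬ ltP j x ∧ ndes ltP (x0 :: t)) := fun h => h.1 hjx
          rw [if_neg hne, hpiv, hinc]
          simp only [Bool.false_eq_true, if_false, add_zero]
          rw [pow_add]
          ring
        · have hpiv : pivB ltP x j = true := by
            simp only [pivB, decide_eq_true_eq]
            exact ⟨hx.1, hxj, hjx⟩
          have hinc : incB ltP j x = true := by
            simp only [incB, decide_eq_true_eq]
            exact ⟨hjx, hxj⟩
          rw [if_pos (⟨hjx, hnd⟩ : ¬ ltP j x ∧ ndes ltP (x0 :: t)), hpiv, hinc]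
          simp only [if_true]
          rw [tnum_succ (c' + 1), pow_add, pow_add]
          ring
      · have hndT : ¬ ndes ltP (x :: x0 :: t) := fun h => hnd (hndxx.1 h).2
        have hne : ¬(¬ ltP j x ∧ ndes ltP (x0 :: t)) := fun h => hnd h.2
        rw [if_neg hndT, if_neg hndT, if_neg hnd, if_neg hnd, if_neg hne]
        ring


theorem countP_range' (P : ℕ → Prop) [DecidablePred P] : ∀ (k a : ℕ),
    (List.range' a k).countP (fun i => decide (P i))
      = ((Finset.Ico a (a + k)).filter P).card
  | 0, a => by simp
  | k + 1, a => by
    rw [List.range'_concat, List.countP_append, countP_range' P k a]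
    have h1 : Finset.Ico a (a + (k + 1)) = insert (a + k) (Finset.Ico a (a + k)) := by
      ext i
      simp only [Finset.mem_Ico, Finset.mem_insert]
      omega
    rw [h1, Finset.filter_insert]
    by_cases h : P (a + k)
    · rw [if_pos h, Finset.card_insert_of_notMem (by simp [Finset.mem_filter])]
      simp [h]
    · rw [if_neg h]
      simp [h]

variable {ltP : ℕ → ℕ → Prop} [DecidableRel ltP]

noncomputable def G (ltP : ℕ → ℕ → Prop) [DecidableRel ltP] (l : List ℕ) : Polynomial ℚ :=
  ((l.permutations').map (fP ltP)).sum

theorem Bmain (n : ℕ)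
    (htrans : ∀ x y z, ltP x y → ltP y z → ltP x z)
    (hnat : ∀ x y, ltP x y → x < y)
    (hnuio : ∀ x y z, x ∈ Finset.Icc 1 n → y ∈ Finset.Icc 1 n → z ∈ Finset.Icc 1 n →
      y ≠ x → y ≠ z → ltP x z →
      ¬ ltP x y → ¬ ltP y x → ¬ ltP y z → ¬ ltP z y → x < y ∧ y < z) :
    ∀ (k j : ℕ), j + k = n + 1 → 1 ≤ j →
    G ltP (List.range' j k) = ∏ i ∈ Finset.Ico j n,
      (1 + Polynomial.X *
        tnum ℚ (((Finset.Icc 1 n).filter fun i2 => i < i2 ∧ ¬ ltP i i2 ∧ ¬ ltP i2 i).card))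
  | 0, j, hjk, hj1 => by
    have hj : j = n + 1 := by omega
    subst hj
    rw [Finset.Ico_eq_empty (by omega), Finset.prod_empty]
    simp [G, List.permutations', fP, ndes, List.Chain', invL]
  | k + 1, j, hjk, hj1 => by
    have hrec := Bmain n htrans hnat hnuio k (j + 1) (by omega) (by omega)
    rw [List.range'_succ]
    set L := List.range' (j + 1) k with hLdef
    set c := L.countP (incB ltP j) with hcdef
    -- G (j :: L) = tnum (c+1) * G L
    have hsum_flat : ∀ (l : List (List ℕ)) (g : List ℕ → List (List ℕ))
        (f : List ℕ → Polynomial ℚ),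
        ((l.flatMap g).map f).sum = (l.map (fun a => ((g a).map f).sum)).sum := by
      intro l g f
      rw [List.map_flatMap, List.flatMap_def, List.sum_flatten, List.map_map]
      rfl
    have hstep : G ltP (j :: L) = tnum ℚ (c + 1) * G ltP L := by
      show ((List.permutations' (j :: L)).map (fP ltP)).sum = _
      rw [show List.permutations' (j :: L)
            = (List.permutations' L).flatMap (List.permutations'Aux j) from rfl]
      rw [hsum_flat]
      have hcongr : ∀ w ∈ List.permutations' L,
          ((List.permutations'Aux j w).map (fP ltP)).sum = tnum ℚ (c + 1) * fP ltP w := by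
        intro w hw
        have hperm : w.Perm L := List.mem_permutations'.1 hw
        have hall : ∀ x ∈ w, j < x ∧ x ≤ n := by
          intro x hx
          have : x ∈ L := hperm.subset hx
          rw [hLdef, List.mem_range'_1] at this
          omega
        rw [Hsum n htrans hnat hnuio j hj1 (by omega) w hall,
          hperm.countP_eq (incB ltP j), ← hcdef]
        unfold fP
        split <;> ring
      rw [List.map_congr_left hcongr]
      exact List.sum_map_mul_left _ _ _
    rw [hstep, hrec]
    -- identify c with the card in the statement
    have hc : c = ((Finset.Icc 1 n).filter
        fun i2 => j < i2 ∧ ¬ ltP j i2 ∧ ¬ ltP i2 j).card := by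
      rw [hcdef, hLdef]
      have : incB ltP j = fun i => decide (¬ ltP j i ∧ ¬ ltP i j) := rfl
      rw [this, countP_range' (fun i => ¬ ltP j i ∧ ¬ ltP i j) k (j + 1)]
      congr 1
      ext i
      simp only [Finset.mem_filter, Finset.mem_Ico, Finset.mem_Icc]
      constructor
      · rintro ⟨⟨h1, h2⟩, h3⟩
        exact ⟨⟨by omega, by omega⟩, by omega, h3⟩
      · rintro ⟨⟨h1, h2⟩, h3, h4⟩
        exact ⟨⟨by omega, by omega⟩, h4⟩
    by_cases hjn : j < n
    · rw [Finset.prod_eq_prod_Ico_succ_bot hjn]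
      rw [tnum_succ, hc]
    · have hj : j = n := by omega
      have hk : k = 0 := by omega
      subst hj hk
      rw [Finset.Ico_self, Finset.prod_empty, Finset.Ico_eq_empty (by omega),
        Finset.prod_empty, hcdef, hLdef]
      simp [tnum_one]

variable {ltP : ℕ → ℕ → Prop} [DecidableRel ltP]

theorem countP_eq_sum_range (p : ℕ → Bool) : ∀ l : List ℕ,
    l.countP p = ∑ i ∈ Finset.range l.length, if p (l.getD i 0) then 1 else 0
  | [] => by simp
  | x :: l => by
    rw [List.countP_cons, List.length_cons, Finset.sum_range_succ']
    simp only [List.getD_cons_succ, List.getD_cons_zero]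
    rw [countP_eq_sum_range p l]

theorem invL_eq_sum : ∀ l : List ℕ,
    invL ltP l = ∑ i ∈ Finset.range l.length, ∑ jj ∈ Finset.range l.length,
      if i < jj ∧ l.getD jj 0 < l.getD i 0 ∧ ¬ ltP (l.getD i 0) (l.getD jj 0) ∧
          ¬ ltP (l.getD jj 0) (l.getD i 0) then 1 else 0
  | [] => by simp [invL]
  | x :: l => by
    show l.countP (pivB ltP x) + invL ltP l = _
    rw [List.length_cons, Finset.sum_range_succ', add_comm]
    congr 1
    · rw [invL_eq_sum l]
      apply Finset.sum_congr rfl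
      intro i _
      rw [Finset.sum_range_succ']
      simp only [List.getD_cons_succ]
      rw [if_neg (fun h => (Nat.not_lt_zero _) h.1), add_zero]
      apply Finset.sum_congr rfl
      intro jj _
      exact if_congr (and_congr (by omega) Iff.rfl) rfl rfl
    · rw [countP_eq_sum_range (pivB ltP x) l, Finset.sum_range_succ']
      simp only [List.getD_cons_succ, List.getD_cons_zero]
      rw [if_neg (fun h => (Nat.not_lt_zero _) h.1), add_zero]
      apply Finset.sum_congr rfl
      intro jj _
      apply if_congr _ rfl rfl
      simp only [pivB, decide_eq_true_eq]
      constructor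
      · intro h; exact ⟨Nat.succ_pos _, h⟩
      · rintro ⟨_, h⟩; exact h

theorem invL_eq_card (l : List ℕ) :
    ((Finset.range l.length ×ˢ Finset.range l.length).filter fun p =>
      p.1 < p.2 ∧ l.getD p.2 0 < l.getD p.1 0 ∧ ¬ ltP (l.getD p.1 0) (l.getD p.2 0) ∧
        ¬ ltP (l.getD p.2 0) (l.getD p.1 0)).card = invL ltP l := by
  rw [invL_eq_sum (ltP := ltP) l, Finset.card_filter, Finset.sum_product]

end NUIOaux

open NUIOaux

/-- For a natural unit interval order `P` on `[n]` with incomparability graph `G`: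
`∑_{σ ∈ ND_P} t^{inv_G(σ)} = ∏_{j=1}^{n-1} (1 + t·[a_j]_t)`, where `ND_P` is the set of
permutations with no `P`-descent and `a_j = #{i : {j,i} ∈ E, j < i}`. -/
theorem sum_no_descent_eq_prod (n : ℕ) (ltP : ℕ → ℕ → Prop) [DecidableRel ltP]
    (hmem : ∀ x y, ltP x y → x ∈ Finset.Icc 1 n ∧ y ∈ Finset.Icc 1 n)
    (htrans : ∀ x y z, ltP x y → ltP y z → ltP x z)
    (hnat : ∀ x y, ltP x y → x < y)
    (hnuio : ∀ x y z, x ∈ Finset.Icc 1 n → y ∈ Finset.Icc 1 n → z ∈ Finset.Icc 1 n →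
      y ≠ x → y ≠ z → ltP x z →
      ¬ ltP x y → ¬ ltP y x → ¬ ltP y z → ¬ ltP z y → x < y ∧ y < z) :
    ∑ σ : Equiv.Perm (Fin n),
      (if ∀ i ∈ Finset.range (n - 1), ¬ ltP (word n σ (i + 1)) (word n σ i)
       then (Polynomial.X : Polynomial ℚ) ^ invG n ltP σ else 0)
    = ∏ j ∈ Finset.Icc 1 (n - 1),
        (1 + Polynomial.X *
          tnum ℚ (((Finset.Icc 1 n).filter fun i => j < i ∧ ¬ ltP j i ∧ ¬ ltP i j).card)) := by
  classical
  have hsummand : ∀ σ : Equiv.Perm (Fin n),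
      (if ∀ i ∈ Finset.range (n - 1), ¬ ltP (word n σ (i + 1)) (word n σ i)
       then (Polynomial.X : Polynomial ℚ) ^ invG n ltP σ else 0)
      = fP ltP (List.ofFn fun i : Fin n => (σ i).1 + 1) := by
    intro σ
    set wl := List.ofFn fun i : Fin n => (σ i).1 + 1 with hwl
    have hlen : wl.length = n := by simp [hwl]
    have hword : ∀ i, word n σ i = wl.getD i 0 := by
      intro i
      by_cases h : i < n
      · rw [List.getD_eq_getElem _ _ (by omega)]
        simp only [word, dif_pos h, hwl, List.getElem_ofFn]
      · rw [List.getD_eq_default _ _ (by simp [hwl]; omega)]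
        simp only [word, dif_neg h]
    unfold fP
    apply if_congr
    · rw [ndes, List.Chain', List.isChain_iff_getElem]
      constructor
      · intro H i h
        simp only [List.get_eq_getElem, ← List.getD_eq_getElem _ 0, ← hword]
        exact H i (Finset.mem_range.2 (by omega))
      · intro H i hi
        rw [Finset.mem_range] at hi
        have h' : i + 1 < wl.length := by omega
        have := H i h'
        simp only [List.get_eq_getElem, ← List.getD_eq_getElem _ 0, ← hword] at this
        exact this
    · congr 1
      rw [invG]
      simp only [hword]
      rw [show Finset.range n = Finset.range wl.length from by rw [hlen]]
      exact invL_eq_card (ltP := ltP) wl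
    · rfl
  rw [Finset.sum_congr rfl (fun σ _ => hsummand σ)]
  have hIcc : Finset.Icc 1 (n - 1) = Finset.Ico 1 n := by
    ext i
    simp only [Finset.mem_Icc, Finset.mem_Ico]
    omega
  rw [hIcc, ← Bmain n htrans hnat hnuio n 1 (by omega) le_rfl]
  -- now: ∑ σ, fP (wordL σ) = G ltP (range' 1 n)
  have hbasen : (List.range' 1 n).Nodup := List.nodup_range'
  have hnodupP : (List.range' 1 n).permutations'.Nodup :=
    ((List.permutations_perm_permutations' _).nodup_iff).1
      (List.nodup_permutations _ hbasen)
  have hwperm : ∀ σ : Equiv.Perm (Fin n),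
      (List.ofFn fun i : Fin n => (σ i).1 + 1).Perm (List.range' 1 n) := by
    intro σ
    apply List.perm_of_nodup_nodup_toFinset_eq
    · rw [List.nodup_ofFn]
      intro a b h
      simp only at h
      exact σ.injective (Fin.ext (by omega))
    · exact hbasen
    · ext a
      simp only [List.mem_toFinset, List.mem_ofFn, Set.mem_range, List.mem_range'_1]
      constructor
      · rintro ⟨i, rfl⟩
        have := (σ i).isLt
        omega
      · rintro ⟨h1, h2⟩
        refine ⟨σ.symm ⟨a - 1, by omega⟩, ?_⟩
        rw [Equiv.apply_symm_apply]
        show a - 1 + 1 = a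
        omega
  unfold G
  rw [← List.sum_toFinset _ hnodupP]
  apply Finset.sum_bij (i := fun (σ : Equiv.Perm (Fin n)) _ =>
    List.ofFn fun i : Fin n => (σ i).1 + 1)
  · intro σ _
    rw [List.mem_toFinset, List.mem_permutations']
    exact hwperm σ
  · intro σ _ τ _ h
    have h2 := List.ofFn_injective h
    apply Equiv.ext
    intro i
    have h3 := congrFun h2 i
    exact Fin.ext (by omega : ((σ i : Fin n) : ℕ) = (τ i : Fin n))
  · intro w hw
    rw [List.mem_toFinset, List.mem_permutations'] at hw
    have hlenw : w.length = n := hw.length_eq.trans (by simp)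
    have hnodw : w.Nodup := (hw.nodup_iff).2 hbasen
    have hbnd : ∀ (i : ℕ) (h : i < w.length), 1 ≤ w.get ⟨i, h⟩ ∧ w.get ⟨i, h⟩ < n + 1 := by
      intro i h
      have hm : w.get ⟨i, h⟩ ∈ List.range' 1 n := hw.subset (List.get_mem w ⟨i, h⟩)
      rw [List.mem_range'_1] at hm
      omega
    have hinj : Function.Injective (fun i : Fin n =>
        (⟨w.get ⟨i.1, by omega⟩ - 1, by
          have := hbnd i.1 (by omega); omega⟩ : Fin n)) := by
      intro a b hab
      simp only [Fin.mk.injEq] at hab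
      have ha := hbnd a.1 (by omega)
      have hb := hbnd b.1 (by omega)
      have hg : w.get ⟨a.1, by omega⟩ = w.get ⟨b.1, by omega⟩ := by omega
      have := List.nodup_iff_injective_get.1 hnodw hg
      exact Fin.ext (by simpa using congrArg Fin.val this)
    refine ⟨Equiv.ofBijective _ ((Finite.injective_iff_bijective).1 hinj),
      Finset.mem_univ _, ?_⟩
    apply List.ext_get (by simp [hlenw])
    intro i h1 h2
    simp only [List.get_ofFn, Equiv.ofBijective_apply, Fin.coe_cast]
    have := hbnd i h2
    omega
  · intro σ _
    rfl
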